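/- Let $d \ge 1$ and let $\mathrm{LO}_f(m)$ denote, for each $f \le d$, the supremum over all $\ell \in \mathbb{R}$, all $k$, and all multilinear polynomials $P \in \mathbb{R}[x_1,\dots,x_k]$ of degree at most $f$ whose hypergraph of nonzero degree-$f$ coefficients has a matching of size at least $m$, of $\Pr[P(\xi_1,\dots,\xi_k) = \ell]$, where $\xi_1,\dots,\xi_k$ are i.i.d. Rademacher. Consider a multilinear polynomial $P \in \mathbb{R}[x_1,\dots,x_k]$ of degree at most $d$, and for each $f \in \{0,\dots,d\}$ let $b_f$ bound the absolute values of all degree-$f$ coefficients of $P$. Suppose that for some $f \in \{0,\dots,d\}$ and $t \in \mathbb{N}$, the $f$-uniform hypergraph on $[k]$ whose edges are the $f$-sets $I$ with $|\widehat P(I)| > t b_{f+1} + t^2 b_{f+2} + \dots + t^{d-f} b_d$ has a matching of size at least $t$. Then $\sup_{\ell \in \mathbb{R}} \Pr[P(\xi_1,\dots,\xi_k) = \ell] \le C_d \sup_{f \le d} \mathrm{LO}_f(c_d t)$ for constants $C_d, c_d > 0$ depending only on $d$. -/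

import Mathlib

open Finset
open scoped Classical

/-- The probability that a multilinear polynomial with coefficients `c`, evaluated at
i.i.d. Rademacher random variables, equals `ℓ`. -/
noncomputable def radProb (k : ℕ) (c : Finset (Fin k) → ℝ) (ℓ : ℝ) : ℝ :=
  (((Finset.univ : Finset (Fin k → Bool)).filter (fun x =>
      (∑ S : Finset (Fin k), c S * ∏ i ∈ S, (if x i then (1 : ℝ) else -1)) = ℓ)).card : ℝ) /
    (2 : ℝ) ^ k

/-- `LO f m`: the supremum of `Pr[P(ξ₁,…,ξ_k) = ℓ]` over all `ℓ ∈ ℝ`, all `k ∈ ℕ` and all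
multilinear polynomials `P` of degree at most `f` whose `f`-uniform hypergraph of nonzero
degree-`f` coefficients has a matching of size at least `m`. -/
noncomputable def LO (f m : ℕ) : ℝ :=
  sSup {p : ℝ | ∃ (k : ℕ) (c : Finset (Fin k) → ℝ) (ℓ : ℝ),
    (∀ S : Finset (Fin k), f < S.card → c S = 0) ∧
    (∃ M : Finset (Finset (Fin k)), m ≤ M.card ∧ (∀ I ∈ M, I.card = f ∧ c I ≠ 0) ∧
      ∀ a ∈ M, ∀ b ∈ M, a ≠ b → Disjoint a b) ∧
    p = radProb k c ℓ}

noncomputable def evalP (k : ℕ) (c : Finset (Fin k) → ℝ) (x : Fin k → Bool) : ℝ :=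
  ∑ S : Finset (Fin k), c S * ∏ i ∈ S, (if x i then (1 : ℝ) else -1)

lemma radProb_eq (k : ℕ) (c : Finset (Fin k) → ℝ) (ℓ : ℝ) :
    radProb k c ℓ = ((Finset.univ.filter (fun x => evalP k c x = ℓ)).card : ℝ) / 2 ^ k := rfl

lemma radProb_nonneg (k : ℕ) (c : Finset (Fin k) → ℝ) (ℓ : ℝ) : 0 ≤ radProb k c ℓ := by
  unfold radProb; positivity

lemma card_bool_fun (k : ℕ) : ((Finset.univ : Finset (Fin k → Bool)).card : ℝ) = 2 ^ k := by
  rw [Finset.card_univ, Fintype.card_fun]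
  simp

lemma radProb_le_one (k : ℕ) (c : Finset (Fin k) → ℝ) (ℓ : ℝ) : radProb k c ℓ ≤ 1 := by
  rw [radProb_eq, div_le_one (by positivity)]
  calc ((Finset.univ.filter (fun x => evalP k c x = ℓ)).card : ℝ)
      ≤ ((Finset.univ : Finset (Fin k → Bool)).card : ℝ) := by
        exact_mod_cast Finset.card_filter_le _ _
    _ = 2 ^ k := card_bool_fun k

lemma LO_bddAbove (f m : ℕ) : ∀ p ∈ {p : ℝ | ∃ (k : ℕ) (c : Finset (Fin k) → ℝ) (ℓ : ℝ),
    (∀ S : Finset (Fin k), f < S.card → c S = 0) ∧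
    (∃ M : Finset (Finset (Fin k)), m ≤ M.card ∧ (∀ I ∈ M, I.card = f ∧ c I ≠ 0) ∧
      ∀ a ∈ M, ∀ b ∈ M, a ≠ b → Disjoint a b) ∧
    p = radProb k c ℓ}, p ≤ 1 := by
  rintro p ⟨k, c, ℓ, -, -, rfl⟩
  exact radProb_le_one k c ℓ

lemma le_LO {f m k : ℕ} {c : Finset (Fin k) → ℝ} {ℓ : ℝ}
    (hdeg : ∀ S : Finset (Fin k), f < S.card → c S = 0)
    (hM : ∃ M : Finset (Finset (Fin k)), m ≤ M.card ∧ (∀ I ∈ M, I.card = f ∧ c I ≠ 0) ∧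
      ∀ a ∈ M, ∀ b ∈ M, a ≠ b → Disjoint a b) :
    radProb k c ℓ ≤ LO f m :=
  le_csSup ⟨1, LO_bddAbove f m⟩ ⟨k, c, ℓ, hdeg, hM, rfl⟩

lemma LO_nonneg (f m : ℕ) : 0 ≤ LO f m := by
  apply Real.sSup_nonneg
  rintro p ⟨k, c, ℓ, -, -, rfl⟩
  exact radProb_nonneg k c ℓ

lemma LO_anti (f : ℕ) {m₁ m₂ : ℕ} (h : m₁ ≤ m₂) : LO f m₂ ≤ LO f m₁ := by
  by_cases hne : {p : ℝ | ∃ (k : ℕ) (c : Finset (Fin k) → ℝ) (ℓ : ℝ),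
      (∀ S : Finset (Fin k), f < S.card → c S = 0) ∧
      (∃ M : Finset (Finset (Fin k)), m₂ ≤ M.card ∧ (∀ I ∈ M, I.card = f ∧ c I ≠ 0) ∧
        ∀ a ∈ M, ∀ b ∈ M, a ≠ b → Disjoint a b) ∧
      p = radProb k c ℓ}.Nonempty
  · apply csSup_le_csSup ⟨1, LO_bddAbove f m₁⟩ hne
    rintro p ⟨k, c, ℓ, hdeg, ⟨M, hMc, hMe, hMd⟩, rfl⟩
    exact ⟨k, c, ℓ, hdeg, ⟨M, le_trans h hMc, hMe, hMd⟩, rfl⟩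
  · rw [Set.not_nonempty_iff_eq_empty] at hne
    have h0 : LO f m₂ = 0 := by
      unfold LO
      rw [hne]
      exact Real.sSup_empty
    rw [h0]
    exact LO_nonneg f m₁

lemma LO_le_iSup (d m f : ℕ) (hf : f ≤ d) : LO f m ≤ ⨆ f' : Fin (d + 1), LO ↑f' m := by
  exact le_ciSup (f := fun f' : Fin (d+1) => LO ↑f' m)
    (Set.Finite.bddAbove (Set.finite_range _)) ⟨f, by omega⟩

lemma iSup_LO_nonneg (d m : ℕ) : 0 ≤ ⨆ f' : Fin (d + 1), LO ↑f' m :=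
  le_trans (LO_nonneg 0 m) (LO_le_iSup d m 0 (by omega))

noncomputable def resC (k : ℕ) (c : Finset (Fin k) → ℝ) (V : Finset (Fin k)) (y : Fin k → Bool) :
    Finset (Fin k) → ℝ := fun I =>
  if I ⊆ Vᶜ then ∑ J ∈ V.powerset, c (I ∪ J) * ∏ j ∈ J, (if y j then (1 : ℝ) else -1) else 0

lemma evalP_resC (k : ℕ) (c : Finset (Fin k) → ℝ) (V : Finset (Fin k)) (x y : Fin k → Bool) :
    evalP k (resC k c V y) x = evalP k c (fun i => if i ∈ V then y i else x i) := by
  have h1 : evalP k (resC k c V y) x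
      = ∑ I ∈ Vᶜ.powerset, (∑ J ∈ V.powerset,
          c (I ∪ J) * ∏ j ∈ J, (if y j then (1 : ℝ) else -1))
            * ∏ i ∈ I, (if x i then (1 : ℝ) else -1) := by
    unfold evalP
    rw [← Finset.sum_subset (Finset.subset_univ Vᶜ.powerset)]
    · exact Finset.sum_congr rfl (fun I hI => by
        rw [resC, if_pos (Finset.mem_powerset.1 hI)])
    · intro I _ hI
      rw [resC, if_neg (fun h => hI (Finset.mem_powerset.2 h)), zero_mul]
  rw [h1]
  have h2 : ∀ I ∈ Vᶜ.powerset,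
      (∑ J ∈ V.powerset, c (I ∪ J) * ∏ j ∈ J, (if y j then (1 : ℝ) else -1))
        * ∏ i ∈ I, (if x i then (1 : ℝ) else -1)
      = ∑ J ∈ V.powerset, c (I ∪ J) * ((∏ j ∈ J, (if y j then (1 : ℝ) else -1))
          * ∏ i ∈ I, (if x i then (1 : ℝ) else -1)) := by
    intro I _
    rw [Finset.sum_mul]
    exact Finset.sum_congr rfl (fun J _ => by ring)
  rw [Finset.sum_congr rfl h2, ← Finset.sum_product']
  unfold evalP
  apply Finset.sum_nbij' (i := fun p => p.1 ∪ p.2) (j := fun S => (S ∩ Vᶜ, S ∩ V))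
  · intro p _; exact Finset.mem_univ _
  · intro S _
    rw [Finset.mem_product]
    exact ⟨Finset.mem_powerset.2 Finset.inter_subset_right,
           Finset.mem_powerset.2 Finset.inter_subset_right⟩
  · intro p hp
    rw [Finset.mem_product] at hp
    have hI : p.1 ⊆ Vᶜ := Finset.mem_powerset.1 hp.1
    have hJ : p.2 ⊆ V := Finset.mem_powerset.1 hp.2
    have e1 : (p.1 ∪ p.2) ∩ Vᶜ = p.1 := by
      ext a
      simp only [Finset.mem_inter, Finset.mem_union, Finset.mem_compl]
      constructor
      · rintro ⟨h1 | h1, h2⟩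
        · exact h1
        · exact absurd (hJ h1) h2
      · intro ha
        exact ⟨Or.inl ha, Finset.mem_compl.1 (hI ha)⟩
    have e2 : (p.1 ∪ p.2) ∩ V = p.2 := by
      ext a
      simp only [Finset.mem_inter, Finset.mem_union]
      constructor
      · rintro ⟨h1 | h1, h2⟩
        · exact absurd h2 (Finset.mem_compl.1 (hI h1))
        · exact h1
      · intro ha
        exact ⟨Or.inr ha, hJ ha⟩
    exact Prod.ext e1 e2
  · intro S _
    ext a
    simp only [Finset.mem_union, Finset.mem_inter, Finset.mem_compl]
    by_cases h : a ∈ V <;> simp [h]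
  · intro p hp
    rw [Finset.mem_product] at hp
    have hI : p.1 ⊆ Vᶜ := Finset.mem_powerset.1 hp.1
    have hJ : p.2 ⊆ V := Finset.mem_powerset.1 hp.2
    have hdisj : Disjoint p.1 p.2 := by
      rw [Finset.disjoint_left]
      intro a ha hb
      exact (Finset.mem_compl.1 (hI ha)) (hJ hb)
    rw [Finset.prod_union hdisj]
    congr 1
    rw [mul_comm]
    congr 1
    · exact Finset.prod_congr rfl (fun i hi => by
        simp [Finset.mem_compl.1 (hI hi)])
    · exact Finset.prod_congr rfl (fun j hj => by simp [hJ hj])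

noncomputable def flipE (k : ℕ) (V : Finset (Fin k)) :
    ((Fin k → Bool) × (Fin k → Bool)) ≃ ((Fin k → Bool) × (Fin k → Bool)) where
  toFun p := (fun i => if i ∈ V then p.2 i else p.1 i, fun i => if i ∈ V then p.1 i else p.2 i)
  invFun p := (fun i => if i ∈ V then p.2 i else p.1 i, fun i => if i ∈ V then p.1 i else p.2 i)
  left_inv p := by
    cases p
    simp only [Prod.mk.injEq]
    constructor <;> funext i <;> by_cases h : i ∈ V <;> simp [h]
  right_inv p := by
    cases p
    simp only [Prod.mk.injEq]
    constructor <;> funext i <;> by_cases h : i ∈ V <;> simp [h]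

lemma sum_radProb_resC (k : ℕ) (c : Finset (Fin k) → ℝ) (V : Finset (Fin k)) (ℓ : ℝ) :
    ∑ y : Fin k → Bool, radProb k (resC k c V y) ℓ = 2 ^ k * radProb k c ℓ := by
  have key : ∑ y : Fin k → Bool,
      ((Finset.univ.filter (fun x => evalP k (resC k c V y) x = ℓ)).card : ℝ)
      = 2 ^ k * ((Finset.univ.filter (fun x => evalP k c x = ℓ)).card : ℝ) := by
    have h1 : ∀ y : Fin k → Bool,
        ((Finset.univ.filter (fun x => evalP k (resC k c V y) x = ℓ)).card : ℝ)
        = ∑ x : Fin k → Bool,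
            (if evalP k c (fun i => if i ∈ V then y i else x i) = ℓ then (1:ℝ) else 0) := by
      intro y
      rw [← Finset.sum_boole]
      exact Finset.sum_congr rfl (fun x _ => by rw [evalP_resC])
    calc ∑ y : Fin k → Bool,
          ((Finset.univ.filter (fun x => evalP k (resC k c V y) x = ℓ)).card : ℝ)
        = ∑ y : Fin k → Bool, ∑ x : Fin k → Bool,
            (if evalP k c (fun i => if i ∈ V then y i else x i) = ℓ then (1:ℝ) else 0) :=
          Finset.sum_congr rfl (fun y _ => h1 y)
      _ = ∑ x : Fin k → Bool, ∑ y : Fin k → Bool,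
            (if evalP k c (fun i => if i ∈ V then y i else x i) = ℓ then (1:ℝ) else 0) :=
          Finset.sum_comm
      _ = ∑ p : (Fin k → Bool) × (Fin k → Bool),
            (if evalP k c ((flipE k V p).1) = ℓ then (1:ℝ) else 0) := by
          rw [Fintype.sum_prod_type]
          rfl
      _ = ∑ p : (Fin k → Bool) × (Fin k → Bool),
            (if evalP k c p.1 = ℓ then (1:ℝ) else 0) :=
          Equiv.sum_comp (flipE k V) (fun p => if evalP k c p.1 = ℓ then (1:ℝ) else 0)
      _ = ∑ x : Fin k → Bool, ∑ _y : Fin k → Bool,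
            (if evalP k c x = ℓ then (1:ℝ) else 0) := by
          rw [Fintype.sum_prod_type]
      _ = 2 ^ k * ((Finset.univ.filter (fun x => evalP k c x = ℓ)).card : ℝ) := by
          rw [← Finset.sum_boole (p := fun x => evalP k c x = ℓ), Finset.mul_sum]
          exact Finset.sum_congr rfl (fun x _ => by
            rw [Finset.sum_const, nsmul_eq_mul, Finset.card_univ, Fintype.card_fun]
            norm_num)
  simp only [radProb_eq]
  rw [← Finset.sum_div, key]
  ring
lemma radProb_le_of_resC {k : ℕ} {c : Finset (Fin k) → ℝ} (V : Finset (Fin k)) {ℓ R : ℝ}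
    (hR : ∀ y : Fin k → Bool, radProb k (resC k c V y) ℓ ≤ R) :
    radProb k c ℓ ≤ R := by
  have h := sum_radProb_resC k c V ℓ
  have h2 : ∑ y : Fin k → Bool, radProb k (resC k c V y) ℓ ≤ (2:ℝ) ^ k * R := by
    calc ∑ y : Fin k → Bool, radProb k (resC k c V y) ℓ ≤ ∑ _y : Fin k → Bool, R :=
          Finset.sum_le_sum (fun y _ => hR y)
      _ = (2:ℝ) ^ k * R := by
          rw [Finset.sum_const, nsmul_eq_mul, Finset.card_univ, Fintype.card_fun]
          norm_num
  rw [h] at h2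
  exact le_of_mul_le_mul_left h2 (by positivity)

lemma sum_powerset_card {k : ℕ} (V : Finset (Fin k)) (h : ℕ → ℝ) :
    ∑ J ∈ V.powerset, h J.card
      = ∑ j ∈ Finset.range (V.card + 1), (V.card.choose j : ℝ) * h j := by
  rw [Finset.sum_powerset]
  refine Finset.sum_congr rfl (fun j _ => ?_)
  rw [Finset.sum_congr rfl (fun J hJ => by rw [(Finset.mem_powersetCard.1 hJ).2]),
    Finset.sum_const, Finset.card_powersetCard, nsmul_eq_mul]

lemma W_le (n t t' v f h : ℕ) (htv : t' + v ≤ t) :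
    ∑ p ∈ (Finset.Icc f n ×ˢ Finset.range (v + 1)).filter (fun p => p.1 + p.2 = h),
        t' ^ (p.1 - f) * v.choose p.2 ≤ t ^ (h - f) := by
  have hsub : (Finset.Icc f n ×ˢ Finset.range (v + 1)).filter (fun p => p.1 + p.2 = h)
      ⊆ (Finset.range (h - f + 1)).image (fun a => (f + a, h - f - a)) := by
    intro p hp
    simp only [Finset.mem_filter, Finset.mem_product, Finset.mem_Icc, Finset.mem_range] at hp
    obtain ⟨⟨⟨hf1, hf2⟩, hf3⟩, hsum⟩ := hp
    rw [Finset.mem_image]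
    refine ⟨p.1 - f, by rw [Finset.mem_range]; omega, ?_⟩
    have h1 : f + (p.1 - f) = p.1 := by omega
    have h2 : h - f - (p.1 - f) = p.2 := by omega
    rw [h1, h2]
  calc ∑ p ∈ (Finset.Icc f n ×ˢ Finset.range (v + 1)).filter (fun p => p.1 + p.2 = h),
          t' ^ (p.1 - f) * v.choose p.2
      ≤ ∑ p ∈ (Finset.range (h - f + 1)).image (fun a => (f + a, h - f - a)),
          t' ^ (p.1 - f) * v.choose p.2 := Finset.sum_le_sum_of_subset hsub
    _ = ∑ a ∈ Finset.range (h - f + 1), t' ^ (f + a - f) * v.choose (h - f - a) :=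
        Finset.sum_image (fun a _ a' _ hee => by
          have := congrArg Prod.fst hee
          simpa using this)
    _ = ∑ a ∈ Finset.range (h - f + 1), t' ^ a * v.choose (h - f - a) := by
        refine Finset.sum_congr rfl (fun a _ => ?_)
        rw [Nat.add_sub_cancel_left]
    _ ≤ ∑ a ∈ Finset.range (h - f + 1), t' ^ a * v ^ (h - f - a) * (h - f).choose a := by
        refine Finset.sum_le_sum (fun a ha => ?_)
        rw [Finset.mem_range] at ha
        have h1 : v.choose (h - f - a) ≤ v ^ (h - f - a) := Nat.choose_le_pow _ _
        have h2 : 1 ≤ (h - f).choose a := Nat.succ_le_of_lt (Nat.choose_pos (by omega))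
        calc t' ^ a * v.choose (h - f - a) ≤ t' ^ a * v ^ (h - f - a) :=
              Nat.mul_le_mul_left _ h1
          _ ≤ t' ^ a * v ^ (h - f - a) * (h - f).choose a := Nat.le_mul_of_pos_right _ (by omega)
    _ = (t' + v) ^ (h - f) := (add_pow t' v (h - f)).symm
    _ ≤ t ^ (h - f) := Nat.pow_le_pow_left htv _

lemma star (n : ℕ) (β : ℕ → ℝ) (hβ0 : ∀ h, 0 ≤ β h) (hβd : ∀ h, n + 1 < h → β h = 0)
    (t t' v f : ℕ) (htv : t' + v ≤ t) (hf : f ≤ n) :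
    ∑ g ∈ Finset.Icc f n, (t' : ℝ) ^ (g - f)
        * (∑ j ∈ Finset.range (v + 1), (v.choose j : ℝ) * β (g + j))
      ≤ ∑ h ∈ Finset.Icc f (n + 1), (t : ℝ) ^ (h - f) * β h := by
  have e1 : ∑ g ∈ Finset.Icc f n, (t' : ℝ) ^ (g - f)
        * (∑ j ∈ Finset.range (v + 1), (v.choose j : ℝ) * β (g + j))
      = ∑ p ∈ Finset.Icc f n ×ˢ Finset.range (v + 1),
          (t' : ℝ) ^ (p.1 - f) * ((v.choose p.2 : ℝ) * β (p.1 + p.2)) := by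
    rw [Finset.sum_product]
    exact Finset.sum_congr rfl (fun g _ => by rw [Finset.mul_sum])
  rw [e1]
  have hmaps : ∀ p ∈ Finset.Icc f n ×ˢ Finset.range (v + 1), p.1 + p.2 ∈ Finset.Icc f (n + v) := by
    intro p hp
    rw [Finset.mem_product, Finset.mem_Icc] at hp
    rw [Finset.mem_range] at hp
    rw [Finset.mem_Icc]
    omega
  rw [← Finset.sum_fiberwise_of_maps_to hmaps]
  have hinner : ∀ h ∈ Finset.Icc f (n + v),
      ∑ p ∈ (Finset.Icc f n ×ˢ Finset.range (v + 1)).filter (fun p => p.1 + p.2 = h),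
          (t' : ℝ) ^ (p.1 - f) * ((v.choose p.2 : ℝ) * β (p.1 + p.2))
      ≤ (if h ≤ n + 1 then (t : ℝ) ^ (h - f) * β h else 0) := by
    intro h hh
    by_cases hle : h ≤ n + 1
    · rw [if_pos hle]
      have e2 : ∑ p ∈ (Finset.Icc f n ×ˢ Finset.range (v + 1)).filter (fun p => p.1 + p.2 = h),
          (t' : ℝ) ^ (p.1 - f) * ((v.choose p.2 : ℝ) * β (p.1 + p.2))
          = ((∑ p ∈ (Finset.Icc f n ×ˢ Finset.range (v + 1)).filter (fun p => p.1 + p.2 = h),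
              t' ^ (p.1 - f) * v.choose p.2 : ℕ) : ℝ) * β h := by
        push_cast
        rw [Finset.sum_mul]
        refine Finset.sum_congr rfl (fun p hp => ?_)
        have hph : p.1 + p.2 = h := (Finset.mem_filter.1 hp).2
        rw [hph]
        ring
      rw [e2]
      have hW := W_le n t t' v f h htv
      have hWr : ((∑ p ∈ (Finset.Icc f n ×ˢ Finset.range (v + 1)).filter
            (fun p => p.1 + p.2 = h), t' ^ (p.1 - f) * v.choose p.2 : ℕ) : ℝ)
          ≤ (t : ℝ) ^ (h - f) := by
        exact_mod_cast hW
      exact mul_le_mul_of_nonneg_right hWr (hβ0 h)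
    · rw [if_neg hle]
      apply le_of_eq
      apply Finset.sum_eq_zero
      intro p hp
      have hph : p.1 + p.2 = h := (Finset.mem_filter.1 hp).2
      rw [hph, hβd h (by omega), mul_zero, mul_zero]
  calc ∑ h ∈ Finset.Icc f (n + v),
        ∑ p ∈ (Finset.Icc f n ×ˢ Finset.range (v + 1)).filter (fun p => p.1 + p.2 = h),
          (t' : ℝ) ^ (p.1 - f) * ((v.choose p.2 : ℝ) * β (p.1 + p.2))
      ≤ ∑ h ∈ Finset.Icc f (n + v), (if h ≤ n + 1 then (t : ℝ) ^ (h - f) * β h else 0) :=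
        Finset.sum_le_sum hinner
    _ = ∑ h ∈ (Finset.Icc f (n + v)).filter (fun h => h ≤ n + 1), (t : ℝ) ^ (h - f) * β h :=
        (Finset.sum_filter _ _).symm
    _ ≤ ∑ h ∈ Finset.Icc f (n + 1), (t : ℝ) ^ (h - f) * β h := by
        apply Finset.sum_le_sum_of_subset_of_nonneg
        · intro x hx
          simp only [Finset.mem_filter, Finset.mem_Icc] at hx ⊢
          omega
        · intro i _ _
          have := hβ0 i
          positivity

lemma exists_max_matching (k d : ℕ) (hd : 1 ≤ d) (cc : Finset (Fin k) → ℝ) :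
    ∃ N : Finset (Finset (Fin k)),
      (∀ I ∈ N, I.card = d ∧ cc I ≠ 0) ∧
      (∀ a ∈ N, ∀ b ∈ N, a ≠ b → Disjoint a b) ∧
      (∀ S : Finset (Fin k), S.card = d → cc S ≠ 0 → ∃ I ∈ N, ¬ Disjoint S I) := by
  classical
  obtain ⟨N, hN, hmax⟩ := Finset.exists_max_image
    ((Finset.univ : Finset (Finset (Finset (Fin k)))).filter
      (fun N => (∀ I ∈ N, I.card = d ∧ cc I ≠ 0) ∧
        ∀ a ∈ N, ∀ b ∈ N, a ≠ b → Disjoint a b))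
    Finset.card ⟨∅, by simp⟩
  rw [Finset.mem_filter] at hN
  obtain ⟨-, hNe, hNd⟩ := hN
  refine ⟨N, hNe, hNd, ?_⟩
  intro S hScard hSne
  by_contra hcon
  push_neg at hcon
  have hSN : S ∉ N := by
    intro hSN
    have h1 := hcon S hSN
    have h2 : S = ∅ := by simpa using disjoint_self.mp h1
    rw [h2] at hScard
    simp at hScard
    omega
  have hmem : (insert S N) ∈ (Finset.univ : Finset (Finset (Finset (Fin k)))).filter
      (fun N => (∀ I ∈ N, I.card = d ∧ cc I ≠ 0) ∧
        ∀ a ∈ N, ∀ b ∈ N, a ≠ b → Disjoint a b) := by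
    rw [Finset.mem_filter]
    refine ⟨Finset.mem_univ _, ?_, ?_⟩
    · intro I hI
      rcases Finset.mem_insert.1 hI with rfl | hI
      · exact ⟨hScard, hSne⟩
      · exact hNe I hI
    · intro a ha b hb hab
      rcases Finset.mem_insert.1 ha with ha' | ha'
      · rcases Finset.mem_insert.1 hb with hb' | hb'
        · exact absurd (ha'.trans hb'.symm) hab
        · subst ha'
          exact hcon b hb'
      · rcases Finset.mem_insert.1 hb with hb' | hb'
        · subst hb'
          exact (hcon a ha').symm
        · exact hNd a ha' b hb' hab
  have hcard := hmax _ hmem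
  rw [Finset.card_insert_of_notMem hSN] at hcard
  omega

noncomputable def cdd (d : ℕ) : ℝ := 1 / (2 ^ d * (d + 1))

lemma cdd_pos (d : ℕ) : 0 < cdd d := by unfold cdd; positivity

lemma cdd_le_one (d : ℕ) : cdd d ≤ 1 := by
  unfold cdd
  rw [div_le_one (by positivity)]
  have h1 : (1:ℝ) ≤ 2 ^ d := one_le_pow₀ (by norm_num)
  nlinarith [Nat.cast_nonneg (α := ℝ) d]

lemma half_le_LO (m : ℕ) (hm : m ≤ 1) : (1:ℝ) / 2 ≤ LO 1 m := by
  classical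
  set c : Finset (Fin 1) → ℝ := fun S => if S = {0} then (1:ℝ) else 0 with hc
  have heval : ∀ x : Fin 1 → Bool, evalP 1 c x = (if x 0 then (1:ℝ) else -1) := by
    intro x
    unfold evalP
    have hstep : ∀ S : Finset (Fin 1),
        c S * ∏ i ∈ S, (if x i then (1:ℝ) else -1)
        = if S = {0} then (∏ i ∈ S, (if x i then (1:ℝ) else -1)) else 0 := by
      intro S
      rw [hc]
      by_cases h : S = {0} <;> simp [h]
    rw [Finset.sum_congr rfl (fun S _ => hstep S), Finset.sum_ite_eq' Finset.univ ({0} : Finset (Fin 1))]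
    simp
  have hfilter : Finset.univ.filter (fun x : Fin 1 → Bool => evalP 1 c x = 1)
      = {fun _ => true} := by
    ext x
    simp only [Finset.mem_filter, Finset.mem_univ, true_and, Finset.mem_singleton, heval]
    constructor
    · intro hx
      by_cases hb : x 0 = true
      · funext i
        have hi : i = 0 := Subsingleton.elim i 0
        rw [hi, hb]
      · rw [if_neg hb] at hx
        norm_num at hx
    · intro hx
      rw [hx]
      simp
  have hrad : radProb 1 c 1 = 1 / 2 := by
    rw [radProb_eq, hfilter]
    norm_num
  have hdeg : ∀ S : Finset (Fin 1), 1 < S.card → c S = 0 := by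
    intro S hS
    exfalso
    have : S.card ≤ 1 := by
      calc S.card ≤ (Finset.univ : Finset (Fin 1)).card := Finset.card_le_card (Finset.subset_univ S)
        _ = 1 := by simp
    omega
  have hLO : radProb 1 c 1 ≤ LO 1 m := by
    apply le_LO hdeg
    refine ⟨{({0} : Finset (Fin 1))}, ?_, ?_, ?_⟩
    · rw [Finset.card_singleton]; omega
    · intro I hI
      rw [Finset.mem_singleton] at hI
      subst hI
      constructor
      · simp
      · rw [hc]; simp
    · intro a ha b hb hab
      rw [Finset.mem_singleton] at ha hb
      exact absurd (ha.trans hb.symm) hab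
  rw [hrad] at hLO
  exact hLO
lemma abs_weight_le_one {k : ℕ} (y : Fin k → Bool) (J : Finset (Fin k)) :
    |∏ j ∈ J, (if y j then (1:ℝ) else -1)| = 1 := by
  rw [Finset.abs_prod]
  rw [Finset.prod_congr rfl (fun j _ => by
    show |if y j then (1:ℝ) else -1| = 1
    by_cases h : y j = true <;> simp [h])]
  exact Finset.prod_const_one

lemma key (d : ℕ) : ∀ (k : ℕ) (cc : Finset (Fin k) → ℝ) (b : ℕ → ℝ),
    (∀ S : Finset (Fin k), d < S.card → cc S = 0) →
    (∀ S : Finset (Fin k), |cc S| ≤ b S.card) →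
    ∀ f, f ≤ d → ∀ (t : ℕ) (M : Finset (Finset (Fin k))),
      t ≤ M.card →
      (∀ I ∈ M, I.card = f ∧ (∑ g ∈ Finset.Ioc f d, (t : ℝ) ^ (g - f) * b g) < |cc I|) →
      (∀ a ∈ M, ∀ b' ∈ M, a ≠ b' → Disjoint a b') →
      ∀ ℓ : ℝ, radProb k cc ℓ ≤ 2 * ⨆ f' : Fin (d + 1), LO ↑f' ⌈cdd d * ↑t⌉₊ := by
  induction d with
  | zero =>
    intro k cc b hdeg hb f hf t M htM hedge hdisj ℓ
    have hf0 : f = 0 := by omega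
    subst hf0
    have hmem : radProb k cc ℓ ≤ LO 0 ⌈cdd 0 * (t:ℝ)⌉₊ := by
      apply le_LO hdeg
      refine ⟨M, ?_, ?_, hdisj⟩
      · have h1 : ⌈cdd 0 * (t:ℝ)⌉₊ ≤ t := by
          apply Nat.ceil_le.2
          calc cdd 0 * (t:ℝ) ≤ 1 * t :=
              mul_le_mul_of_nonneg_right (cdd_le_one 0) (Nat.cast_nonneg t)
            _ = t := one_mul _
        omega
      · intro I hI
        obtain ⟨hc, hlt⟩ := hedge I hI
        rw [Finset.Ioc_self, Finset.sum_empty] at hlt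
        exact ⟨hc, fun h0 => by rw [h0] at hlt; simp at hlt⟩
    have h1 : LO 0 ⌈cdd 0 * (t:ℝ)⌉₊ ≤ ⨆ f' : Fin 1, LO ↑f' ⌈cdd 0 * (t:ℝ)⌉₊ :=
      LO_le_iSup 0 _ 0 le_rfl
    have h2 := iSup_LO_nonneg 0 ⌈cdd 0 * (t:ℝ)⌉₊
    linarith
  | succ n ih =>
    intro k cc b hdeg hb f hf t M htM hedge hdisj ℓ
    set m := ⌈cdd (n+1) * (t:ℝ)⌉₊ with hm
    have hSUP0 : 0 ≤ ⨆ f' : Fin (n + 2), LO ↑f' m := iSup_LO_nonneg (n+1) m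
    have hmt : m ≤ t := Nat.ceil_le.2 (by
      calc cdd (n+1) * (t:ℝ) ≤ 1 * t :=
          mul_le_mul_of_nonneg_right (cdd_le_one (n+1)) (Nat.cast_nonneg t)
        _ = t := one_mul _)
    by_cases hfd : f = n + 1
    · subst hfd
      have hmem : radProb k cc ℓ ≤ LO (n+1) m := by
        apply le_LO hdeg
        refine ⟨M, by omega, ?_, hdisj⟩
        intro I hI
        obtain ⟨hc, hlt⟩ := hedge I hI
        rw [Finset.Ioc_self, Finset.sum_empty] at hlt
        exact ⟨hc, fun h0 => by rw [h0] at hlt; simp at hlt⟩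
      have h1 : LO (n+1) m ≤ ⨆ f' : Fin (n + 2), LO ↑f' m := LO_le_iSup (n+1) m (n+1) le_rfl
      linarith
    have hfd' : f < n + 1 := lt_of_le_of_ne hf hfd
    by_cases hm1 : m ≤ 1
    · have h12 : (1:ℝ)/2 ≤ LO 1 m := half_le_LO m hm1
      have h1 : LO 1 m ≤ ⨆ f' : Fin (n + 2), LO ↑f' m := LO_le_iSup (n+1) m 1 (by omega)
      have h2 := radProb_le_one k cc ℓ
      linarith
    push_neg at hm1
    have hct : 1 < cdd (n+1) * (t:ℝ) := by
      by_contra hcon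
      push_neg at hcon
      have : m ≤ 1 := Nat.ceil_le.2 (by exact_mod_cast hcon)
      omega
    -- f ≥ 1
    have hf1 : 1 ≤ f := by
      by_contra hcon
      have hf0 : f = 0 := by omega
      subst hf0
      have hM1 : M.card ≤ 1 := by
        have hsub : M ⊆ {∅} := by
          intro I hI
          rw [Finset.mem_singleton]
          exact Finset.card_eq_zero.1 (hedge I hI).1
        calc M.card ≤ ({∅} : Finset (Finset (Fin k))).card := Finset.card_le_card hsub
          _ = 1 := rfl
      have ht1 : t ≤ 1 := le_trans htM hM1
      have h6 : (t:ℝ) ≤ 1 := by exact_mod_cast ht1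
      have h7 := cdd_le_one (n+1)
      have h8 := cdd_pos (n+1)
      nlinarith
    -- t ≤ k
    have htk : t ≤ k := by
      have h1 : (M.biUnion id).card = ∑ I ∈ M, (id I).card :=
        Finset.card_biUnion (fun a ha b' hb' hab => hdisj a ha b' hb' hab)
      have h2 : ∑ I ∈ M, (id I).card = M.card * f := by
        have hcongr : ∀ I ∈ M, (id I).card = f := fun I hI => (hedge I hI).1
        rw [Finset.sum_congr rfl hcongr, Finset.sum_const, smul_eq_mul]
      have h3 : (M.biUnion id).card ≤ k := by
        calc (M.biUnion id).card ≤ (Finset.univ : Finset (Fin k)).card :=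
            Finset.card_le_card (Finset.subset_univ _)
          _ = k := by simp
      have h4 : t * f ≤ M.card * f := Nat.mul_le_mul_right f htM
      have h5 : t ≤ t * f := Nat.le_mul_of_pos_right t (by omega)
      omega
    -- t > n+1 (in particular k > n+1)
    have h2d : (2:ℝ) ≤ 2 ^ (n+1) := by
      calc (2:ℝ) = 2 ^ 1 := (pow_one 2).symm
        _ ≤ 2 ^ (n+1) := pow_le_pow_right₀ (by norm_num) (by omega)
    have h1pow : (1:ℝ) ≤ 2 ^ (n+1) := by linarith
    have htdR : ((n:ℝ) + 1 + 1) < t := by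
      have hpos : (0:ℝ) < 2 ^ (n+1) * ((n:ℝ) + 1 + 1) := by positivity
      have h1 : (2:ℝ) ^ (n+1) * ((n:ℝ) + 1 + 1) < t := by
        have := hct
        rw [cdd] at this
        push_cast at this
        rw [div_mul_eq_mul_div, lt_div_iff₀ hpos, one_mul] at this
        linarith
      nlinarith
    have htd : n + 1 < t := by
      have h9 : ((n:ℝ)+1) < t := by linarith
      exact_mod_cast h9
    -- maximal matching at level n+1
    obtain ⟨N, hNe, hNd, hNmax⟩ := exists_max_matching k (n+1) (by omega) cc
    set s := N.card with hs
    set V := N.biUnion id with hV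
    have hVcard : V.card ≤ (n+1) * s := by
      calc V.card ≤ ∑ I ∈ N, (id I).card := Finset.card_biUnion_le
        _ = s * (n+1) := by
          have hcongr : ∀ I ∈ N, (id I).card = n + 1 := fun I hI => (hNe I hI).1
          rw [Finset.sum_congr rfl hcongr, Finset.sum_const, smul_eq_mul]
        _ = (n+1) * s := Nat.mul_comm s (n+1)
    by_cases hsm : m ≤ s
    · have hmem : radProb k cc ℓ ≤ LO (n+1) m := by
        apply le_LO hdeg
        exact ⟨N, hsm, fun I hI => hNe I hI, hNd⟩
      have h1 : LO (n+1) m ≤ ⨆ f' : Fin (n + 2), LO ↑f' m := LO_le_iSup (n+1) m (n+1) le_rfl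
      linarith
    push_neg at hsm
    have hsr : (s:ℝ) < cdd (n+1) * t := Nat.lt_ceil.1 hsm
    -- numeric bounds
    have hdcd : ((n:ℝ)+1) * cdd (n+1) ≤ 1/2 := by
      rw [cdd]
      rw [mul_one_div, div_le_div_iff₀ (by positivity) (by norm_num)]
      push_cast
      nlinarith [h2d, Nat.cast_nonneg (α := ℝ) n]
    have hdsR : (((n+1) * s : ℕ) : ℝ) < (t:ℝ)/2 := by
      push_cast
      have h1 : ((n:ℝ)+1) * s < ((n:ℝ)+1) * (cdd (n+1) * t) :=
        mul_lt_mul_of_pos_left hsr (by positivity)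
      have h2 : ((n:ℝ)+1) * (cdd (n+1) * t) = (((n:ℝ)+1) * cdd (n+1)) * t := by ring
      have h3 : (((n:ℝ)+1) * cdd (n+1)) * t ≤ (1/2) * t :=
        mul_le_mul_of_nonneg_right hdcd (Nat.cast_nonneg t)
      calc ((n:ℝ)+1) * s < (((n:ℝ)+1) * cdd (n+1)) * t := by linarith
        _ ≤ (1/2) * t := h3
        _ = (t:ℝ)/2 := by ring
    have hds : (n+1) * s < t := by
      have h1 : (((n+1) * s : ℕ) : ℝ) < (t:ℝ) := by
        have : (t:ℝ)/2 ≤ t := by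
          have : (0:ℝ) ≤ t := Nat.cast_nonneg t
          linarith
        linarith
      exact_mod_cast h1
    set t' := t - (n+1) * s with ht'
    have ht'c : (t':ℝ) = (t:ℝ) - ((n+1)*s : ℕ) := by
      rw [ht']
      push_cast [Nat.cast_sub (le_of_lt hds)]
      ring
    have ht'half : (t:ℝ)/2 ≤ t' := by
      rw [ht'c]
      linarith
    have htv : t' + V.card ≤ t := by omega
    -- the reduced matching
    set M' := M.filter (fun I => Disjoint I V) with hM'
    have hk0 : 0 < k := by omega
    have hM'card : t' ≤ M'.card := by
      set Mbad := M.filter (fun I => ¬ Disjoint I V) with hMbad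
      have hbad : Mbad.card ≤ V.card := by
        apply Finset.card_le_card_of_injOn
          (fun I => if h : (I ∩ V).Nonempty then (I ∩ V).min' h else ⟨0, hk0⟩)
        · intro I hI
          rw [hMbad, Finset.mem_coe, Finset.mem_filter] at hI
          have hne : (I ∩ V).Nonempty := Finset.not_disjoint_iff_nonempty_inter.1 hI.2
          simp only [dif_pos hne]
          exact Finset.mem_of_mem_inter_right (Finset.min'_mem _ hne)
        · intro I hI J hJ hIJ
          simp only [Finset.coe_filter, Set.mem_setOf_eq, hMbad] at hI hJ
          by_contra hne
          have hneI : (I ∩ V).Nonempty := Finset.not_disjoint_iff_nonempty_inter.1 hI.2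
          have hneJ : (J ∩ V).Nonempty := Finset.not_disjoint_iff_nonempty_inter.1 hJ.2
          have hIJ' : (I ∩ V).min' hneI = (J ∩ V).min' hneJ := by
            have hIJ2 := hIJ
            dsimp only at hIJ2
            rwa [dif_pos hneI, dif_pos hneJ] at hIJ2
          have h1 : (I ∩ V).min' hneI ∈ I := Finset.mem_of_mem_inter_left (Finset.min'_mem _ _)
          have h2 : (I ∩ V).min' hneI ∈ J := by
            rw [hIJ']
            exact Finset.mem_of_mem_inter_left (Finset.min'_mem _ _)
          exact Finset.disjoint_left.1 (hdisj I hI.1 J hJ.1 hne) h1 h2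
      have hsplit : M'.card + Mbad.card = M.card := by
        rw [hM', hMbad]
        exact Finset.card_filter_add_card_filter_not (p := fun I => Disjoint I V)
      have hbad2 : Mbad.card ≤ (n+1) * s := le_trans hbad hVcard
      omega
    -- truncated bound function
    set bb : ℕ → ℝ := fun h => if h ≤ n + 1 then b h else 0 with hbbdef
    have hbb_bound : ∀ S : Finset (Fin k), |cc S| ≤ bb S.card := by
      intro S
      by_cases hS : S.card ≤ n + 1
      · rw [hbbdef]; simp only [if_pos hS]; exact hb S
      · rw [hbbdef]; simp only [if_neg hS]
        rw [hdeg S (by omega), abs_zero]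
    have hbb0 : ∀ h, 0 ≤ bb h := by
      intro h
      rw [hbbdef]
      by_cases hh : h ≤ n + 1
      · simp only [if_pos hh]
        obtain ⟨T, -, hTcard⟩ := Finset.exists_subset_card_eq (s := (Finset.univ : Finset (Fin k))) (n := h)
          (by simp; omega)
        calc (0:ℝ) ≤ |cc T| := abs_nonneg _
          _ ≤ b T.card := hb T
          _ = b h := by rw [hTcard]
      · simp only [if_neg hh]; exact le_refl 0
    have hbbd : ∀ h, n + 1 < h → bb h = 0 := by
      intro h hh
      rw [hbbdef]
      simp only [if_neg (by omega : ¬ h ≤ n + 1)]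
    have hsum_bb : ∀ I ∈ M, (∑ g ∈ Finset.Ioc f (n+1), (t : ℝ) ^ (g - f) * bb g) < |cc I| := by
      intro I hI
      have h1 : ∑ g ∈ Finset.Ioc f (n+1), (t : ℝ) ^ (g - f) * bb g
          = ∑ g ∈ Finset.Ioc f (n+1), (t : ℝ) ^ (g - f) * b g := by
        refine Finset.sum_congr rfl (fun g hg => ?_)
        rw [Finset.mem_Ioc] at hg
        rw [hbbdef]
        simp only [if_pos hg.2]
      rw [h1]
      exact (hedge I hI).2
    set b' : ℕ → ℝ := fun g => ∑ j ∈ Finset.range (V.card + 1),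
      (V.card.choose j : ℝ) * bb (g + j) with hb'def
    have hb'eq : ∀ g, b' g = ∑ j ∈ Finset.range (V.card + 1),
        (V.card.choose j : ℝ) * bb (g + j) := fun g => by rw [hb'def]
    have hb'0 : ∀ g, 0 ≤ b' g := by
      intro g
      rw [hb'def]
      apply Finset.sum_nonneg
      intro j _
      exact mul_nonneg (Nat.cast_nonneg _) (hbb0 _)
    -- degree drop of the restriction
    have hdeg_res : ∀ (y : Fin k → Bool) (S : Finset (Fin k)),
        n < S.card → resC k cc V y S = 0 := by
      intro y S hS
      rw [resC]
      by_cases hSV : S ⊆ Vᶜ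
      · rw [if_pos hSV]
        apply Finset.sum_eq_zero
        intro J hJ
        have hJV : J ⊆ V := Finset.mem_powerset.1 hJ
        have hdisjSJ : Disjoint S J := by
          rw [Finset.disjoint_left]
          intro a haS haJ
          exact (Finset.mem_compl.1 (hSV haS)) (hJV haJ)
        have hcard : (S ∪ J).card = S.card + J.card := Finset.card_union_of_disjoint hdisjSJ
        by_cases hc : n + 1 < (S ∪ J).card
        · rw [hdeg _ hc, zero_mul]
        · have hSd : S.card = n + 1 := by omega
          have hJ0 : J = ∅ := Finset.card_eq_zero.1 (by omega)
          subst hJ0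
          rw [Finset.union_empty]
          have hccS : cc S = 0 := by
            by_contra hcc
            obtain ⟨I, hIN, hnd⟩ := hNmax S hSd hcc
            apply hnd
            rw [Finset.disjoint_left]
            intro a haS haI
            have haV : a ∈ V := by
              rw [hV]
              exact (Finset.subset_biUnion_of_mem id hIN) haI
            exact (Finset.mem_compl.1 (hSV haS)) haV
          rw [hccS, zero_mul]
      · rw [if_neg hSV]
    -- coefficient bound of the restriction
    have hb_res : ∀ (y : Fin k → Bool) (S : Finset (Fin k)),
        |resC k cc V y S| ≤ b' S.card := by
      intro y S
      rw [resC]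
      by_cases hSV : S ⊆ Vᶜ
      · rw [if_pos hSV]
        have hdisjS : ∀ J ∈ V.powerset, Disjoint S J := by
          intro J hJ
          have hJV : J ⊆ V := Finset.mem_powerset.1 hJ
          rw [Finset.disjoint_left]
          intro a haS haJ
          exact (Finset.mem_compl.1 (hSV haS)) (hJV haJ)
        calc |∑ J ∈ V.powerset, cc (S ∪ J) * ∏ j ∈ J, (if y j then (1:ℝ) else -1)|
            ≤ ∑ J ∈ V.powerset, |cc (S ∪ J) * ∏ j ∈ J, (if y j then (1:ℝ) else -1)| :=
              Finset.abs_sum_le_sum_abs _ _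
          _ = ∑ J ∈ V.powerset, |cc (S ∪ J)| := by
              refine Finset.sum_congr rfl (fun J _ => ?_)
              rw [abs_mul, abs_weight_le_one, mul_one]
          _ ≤ ∑ J ∈ V.powerset, bb (S.card + J.card) := by
              refine Finset.sum_le_sum (fun J hJ => ?_)
              have := hbb_bound (S ∪ J)
              rwa [Finset.card_union_of_disjoint (hdisjS J hJ)] at this
          _ = ∑ j ∈ Finset.range (V.card + 1), (V.card.choose j : ℝ) * bb (S.card + j) :=
              sum_powerset_card V (fun j => bb (S.card + j))
          _ = b' S.card := (hb'eq S.card).symm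
      · rw [if_neg hSV, abs_zero]
        exact hb'0 _
    -- threshold for the restriction
    have hedge_res : ∀ (y : Fin k → Bool), ∀ I ∈ M', I.card = f ∧
        (∑ g ∈ Finset.Ioc f n, (t' : ℝ) ^ (g - f) * b' g) < |resC k cc V y I| := by
      intro y I hI
      rw [hM', Finset.mem_filter] at hI
      obtain ⟨hIM, hIdisj⟩ := hI
      have hIcard : I.card = f := (hedge I hIM).1
      refine ⟨hIcard, ?_⟩
      have hIV : I ⊆ Vᶜ := by
        intro a ha
        rw [Finset.mem_compl]
        exact Finset.disjoint_left.1 hIdisj ha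
      have hdisjI : ∀ J ∈ V.powerset, Disjoint I J := by
        intro J hJ
        have hJV : J ⊆ V := Finset.mem_powerset.1 hJ
        rw [Finset.disjoint_left]
        intro a haI haJ
        exact (Finset.mem_compl.1 (hIV haI)) (hJV haJ)
      -- split off the empty set
      have hsplitI : resC k cc V y I = cc I + ∑ J ∈ V.powerset.erase ∅,
          cc (I ∪ J) * ∏ j ∈ J, (if y j then (1:ℝ) else -1) := by
        rw [resC, if_pos hIV,
          ← Finset.add_sum_erase V.powerset _ (Finset.empty_mem_powerset V)]
        simp
      have hE : |∑ J ∈ V.powerset.erase ∅,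
          cc (I ∪ J) * ∏ j ∈ J, (if y j then (1:ℝ) else -1)| ≤ b' f - bb f := by
        have h1 : |∑ J ∈ V.powerset.erase ∅,
            cc (I ∪ J) * ∏ j ∈ J, (if y j then (1:ℝ) else -1)|
            ≤ ∑ J ∈ V.powerset.erase ∅, bb (f + J.card) := by
          calc |∑ J ∈ V.powerset.erase ∅,
              cc (I ∪ J) * ∏ j ∈ J, (if y j then (1:ℝ) else -1)|
              ≤ ∑ J ∈ V.powerset.erase ∅,
                |cc (I ∪ J) * ∏ j ∈ J, (if y j then (1:ℝ) else -1)| :=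
                Finset.abs_sum_le_sum_abs _ _
            _ ≤ ∑ J ∈ V.powerset.erase ∅, bb (f + J.card) := by
                refine Finset.sum_le_sum (fun J hJ => ?_)
                have hJp : J ∈ V.powerset := Finset.mem_of_mem_erase hJ
                rw [abs_mul, abs_weight_le_one, mul_one]
                have := hbb_bound (I ∪ J)
                rwa [Finset.card_union_of_disjoint (hdisjI J hJp), hIcard] at this
        have h2 : ∑ J ∈ V.powerset.erase ∅, bb (f + J.card)
            = (∑ J ∈ V.powerset, bb (f + J.card)) - bb f := by
          have := Finset.add_sum_erase V.powerset (fun J => bb (f + J.card))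
            (Finset.empty_mem_powerset V)
          simp only [Finset.card_empty, Nat.add_zero] at this
          linarith
        have h3 : ∑ J ∈ V.powerset, bb (f + J.card)
            = ∑ j ∈ Finset.range (V.card + 1), (V.card.choose j : ℝ) * bb (f + j) :=
          sum_powerset_card V (fun j => bb (f + j))
        have h4 : (∑ j ∈ Finset.range (V.card + 1), (V.card.choose j : ℝ) * bb (f + j))
            = b' f := (hb'eq f).symm
        linarith
      have hfn : f ≤ n := by omega
      have hstar : ∑ g ∈ Finset.Icc f n, (t' : ℝ) ^ (g - f) * b' g
          ≤ ∑ h ∈ Finset.Icc f (n+1), (t : ℝ) ^ (h - f) * bb h := by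
        calc ∑ g ∈ Finset.Icc f n, (t' : ℝ) ^ (g - f) * b' g
            = ∑ g ∈ Finset.Icc f n, (t' : ℝ) ^ (g - f)
              * (∑ j ∈ Finset.range (V.card + 1), (V.card.choose j : ℝ) * bb (g + j)) :=
              Finset.sum_congr rfl (fun g _ => by rw [hb'eq])
          _ ≤ _ := star n bb hbb0 hbbd t t' V.card f htv hfn
      have hIccL : ∑ g ∈ Finset.Icc f n, (t' : ℝ) ^ (g - f) * b' g
          = b' f + ∑ g ∈ Finset.Ioc f n, (t' : ℝ) ^ (g - f) * b' g := by
        rw [Finset.Icc_eq_cons_Ioc hfn, Finset.sum_cons]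
        rw [Nat.sub_self, pow_zero, one_mul]
      have hIccR : ∑ h ∈ Finset.Icc f (n+1), (t : ℝ) ^ (h - f) * bb h
          = bb f + ∑ g ∈ Finset.Ioc f (n+1), (t : ℝ) ^ (g - f) * bb g := by
        rw [Finset.Icc_eq_cons_Ioc (by omega : f ≤ n + 1), Finset.sum_cons]
        rw [Nat.sub_self, pow_zero, one_mul]
      have hcc := hsum_bb I hIM
      have habs : |cc I| ≤ |resC k cc V y I| + |∑ J ∈ V.powerset.erase ∅,
          cc (I ∪ J) * ∏ j ∈ J, (if y j then (1:ℝ) else -1)| := by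
        have : cc I = resC k cc V y I - ∑ J ∈ V.powerset.erase ∅,
            cc (I ∪ J) * ∏ j ∈ J, (if y j then (1:ℝ) else -1) := by
          rw [hsplitI]; ring
        rw [this]
        exact abs_sub _ _
      rw [hIccL, hIccR] at hstar
      linarith
    -- apply induction hypothesis to each restriction
    have hM'disj : ∀ a ∈ M', ∀ b' ∈ M', a ≠ b' → Disjoint a b' := by
      intro a ha b'' hb'' hab
      rw [hM', Finset.mem_filter] at ha hb''
      exact hdisj a ha.1 b'' hb''.1 hab
    have hres_bound : ∀ y : Fin k → Bool, radProb k (resC k cc V y) ℓ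
        ≤ 2 * ⨆ f' : Fin (n + 1), LO ↑f' ⌈cdd n * (t':ℝ)⌉₊ := by
      intro y
      exact ih k (resC k cc V y) b' (hdeg_res y) (hb_res y) f (by omega) t' M'
        hM'card (hedge_res y) hM'disj ℓ
    -- compare the two suprema
    have hceil : m ≤ ⌈cdd n * (t':ℝ)⌉₊ := by
      apply Nat.ceil_le_ceil
      have h1 : cdd (n+1) * (t:ℝ) ≤ cdd n * ((t:ℝ)/2) := by
        have hA : cdd (n+1) ≤ cdd n / 2 := by
          rw [cdd, cdd, div_div, div_le_div_iff₀ (by positivity) (by positivity)]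
          push_cast
          ring_nf
          nlinarith [h2d, Nat.cast_nonneg (α := ℝ) n, pow_pos (by norm_num : (0:ℝ) < 2) n]
        calc cdd (n+1) * (t:ℝ) ≤ (cdd n / 2) * t :=
            mul_le_mul_of_nonneg_right hA (Nat.cast_nonneg t)
          _ = cdd n * ((t:ℝ)/2) := by ring
      have h2 : cdd n * ((t:ℝ)/2) ≤ cdd n * t' :=
        mul_le_mul_of_nonneg_left ht'half (le_of_lt (cdd_pos n))
      linarith
    have hsup : (⨆ f' : Fin (n + 1), LO ↑f' ⌈cdd n * (t':ℝ)⌉₊)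
        ≤ ⨆ f' : Fin (n + 2), LO ↑f' m := by
      apply ciSup_le
      intro f'
      have h1 : LO ↑f' ⌈cdd n * (t':ℝ)⌉₊ ≤ LO ↑f' m := LO_anti _ hceil
      have h2 : LO (↑f' : ℕ) m ≤ ⨆ f'' : Fin (n + 2), LO ↑f'' m :=
        LO_le_iSup (n+1) m ↑f' (by omega)
      linarith
    apply radProb_le_of_resC V
    intro y
    calc radProb k (resC k cc V y) ℓ ≤ 2 * ⨆ f' : Fin (n + 1), LO ↑f' ⌈cdd n * (t':ℝ)⌉₊ :=
        hres_bound y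
      _ ≤ 2 * ⨆ f' : Fin (n + 2), LO ↑f' m := by linarith

theorem stmt_15 (d : ℕ) (hd : 1 ≤ d) :
    ∃ (C cd : ℝ), 0 < cd ∧
      ∀ (k : ℕ) (cc : Finset (Fin k) → ℝ) (b : ℕ → ℝ),
        (∀ S : Finset (Fin k), d < S.card → cc S = 0) →
        (∀ S : Finset (Fin k), |cc S| ≤ b S.card) →
        ∀ f ≤ d, ∀ t : ℕ,
          (∃ M : Finset (Finset (Fin k)), t ≤ M.card ∧
            (∀ I ∈ M, I.card = f ∧
              (∑ g ∈ Finset.Ioc f d, (t : ℝ) ^ (g - f) * b g) < |cc I|) ∧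
            ∀ a ∈ M, ∀ b' ∈ M, a ≠ b' → Disjoint a b') →
          ∀ ℓ : ℝ, radProb k cc ℓ ≤ C * ⨆ f' : Fin (d + 1), LO f' ⌈cd * t⌉₊ := by
  refine ⟨2, cdd d, cdd_pos d, ?_⟩
  intro k cc b hdeg hb f hf t hM ℓ
  obtain ⟨M, h1, h2, h3⟩ := hM
  exact key d k cc b hdeg hb f hf t M h1 h2 h3 ℓ
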